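/- arXiv:hep-th/0305189 — 2 statements merged into one kernel-verified Lean document; each statement's English description precedes it below -/
import Mathlib

section
/- Let M be an N-periodic infinite symmetric tridiagonal matrix with nonzero off-diagonal entries. If X is an N-periodic infinite symmetric matrix of maximal degree k commuting with M, then X = A(M) for some polynomial A of degree at most k. -/
namespace Toda

/-- Infinite ℤ×ℤ matrices over ℂ. -/
abbrev Mat : Type := ℤ → ℤ → ℂ

/-- Matrix multiplication (entrywise `tsum`; for band-type matrices these sums
are finitely supported). -/
noncomputable def mul (X Y : Mat) : Mat := fun i j => ∑' k : ℤ, X i k * Y k j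

/-- Commutator. -/
noncomputable def comm (X Y : Mat) : Mat := mul X Y - mul Y X

/-- Strictly upper triangular part. -/
def upper (X : Mat) : Mat := fun i j => if i < j then X i j else 0

/-- Strictly lower triangular part. -/
def lower (X : Mat) : Mat := fun i j => if j < i then X i j else 0

/-- Diagonal part. -/
def diagPart (X : Mat) : Mat := fun i j => if i = j then X i j else 0

/-- Identity matrix. -/
def one : Mat := fun i j => if i = j then 1 else 0

/-- Matrix powers. -/
noncomputable def pow (X : Mat) : ℕ → Mat
  | 0 => one
  | m + 1 => mul X (pow X m)

/-- Evaluate a polynomial on a matrix. -/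
noncomputable def evalPoly (A : Polynomial ℂ) (X : Mat) : Mat :=
  ∑ m ∈ Finset.range (A.natDegree + 1), A.coeff m • pow X m

/-- `N`-periodicity of entries. -/
def Periodic (N : ℕ) (X : Mat) : Prop := ∀ i j, X (i + N) (j + N) = X i j

/-- `X` has (pure) degree `k`: nonzero entries only on diagonal `j = i + k`. -/
def HasDegree (k : ℤ) (X : Mat) : Prop := ∀ i j, X i j ≠ 0 → j = i + k

/-- `X` has maximal degree `k`: entries vanish above diagonal `k`. -/
def MaxDeg (k : ℤ) (X : Mat) : Prop := ∀ i j, X i j ≠ 0 → j - i ≤ k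

/-- The infinite symmetric tridiagonal Toda Lax matrix with diagonal `φ` and
off-diagonal entries `y`. -/
def todaM (φ y : ℤ → ℂ) : Mat := fun i j =>
  if j = i then φ i
  else if j = i + 1 then y i
  else if i = j + 1 then y j
  else 0

/-- Degree-`r` component of a matrix. -/
def topPart (r : ℤ) (X : Mat) : Mat := fun i j => if j = i + r then X i j else 0

/-- Inverse of the degree-`r` component (a matrix of degree `-r`). -/
noncomputable def topInv (r : ℤ) (X : Mat) : Mat :=
  fun i j => if j = i - r then (X j (j + r))⁻¹ else 0

/-- Entrywise geometric series `Σ_{k≥0} (-1)^k Q^k`, which is a finite sum in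
each entry when `Q` has maximal degree `≤ -1`. -/
noncomputable def geomSeries (Q : Mat) : Mat :=
  fun i j => ∑ m ∈ Finset.range ((i - j).toNat + 1), (-1 : ℂ) ^ m * pow Q m i j

/-- The inverse `R⁻¹ = (R^{(r)})⁻¹ Σ_{k≥0} (-1)^k (R̃ (R^{(r)})⁻¹)^k` of a matrix
of maximal degree `r` with invertible top component. -/
noncomputable def geomInv (r : ℤ) (R : Mat) : Mat :=
  mul (topInv r R) (geomSeries (mul (R - topPart r R) (topInv r R)))

/-- Integer powers of a matrix, negative powers via the geometric-series inverse. -/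
noncomputable def intPow (X : Mat) (m : ℤ) : Mat :=
  if 0 ≤ m then pow X m.toNat else pow (geomInv 1 X) (-m).toNat

/-- Shift operator `Z = D^N`. -/
def shiftZ (N : ℕ) : Mat := fun i j => if j = i + N then 1 else 0

/-- Inverse shift `Z⁻¹`. -/
def shiftZinv (N : ℕ) : Mat := fun i j => if j = i - N then 1 else 0

/-- The finite `N×N` periodic Toda Lax matrix with spectral parameter `z`,
diagonal `p`, off-diagonal entries `y 1, …, y (N-1)` and corner entries
`y 0 * z`, `y 0 * z⁻¹`. -/
noncomputable def laxFin (N : ℕ) (p y : ℕ → ℂ) (z : ℂ) :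
    Matrix (Fin N) (Fin N) ℂ := fun i j =>
  if (i : ℕ) = j then p i
  else if (j : ℕ) = i + 1 then y (i + 1)
  else if (i : ℕ) = j + 1 then y (j + 1)
  else if (i : ℕ) = 0 ∧ (j : ℕ) = N - 1 then y 0 * z
  else if (i : ℕ) = N - 1 ∧ (j : ℕ) = 0 then y 0 * z⁻¹
  else 0

/-- Embedding of polynomials in `x` into the field `ℂ((x⁻¹))` of Laurent series
at infinity, sending `x` to the inverse of the local parameter. -/
noncomputable def atInf (p : Polynomial ℂ) : LaurentSeries ℂ :=
  Polynomial.eval₂ HahnSeries.C (HahnSeries.single (-1 : ℤ) 1) p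


section Aux
variable (φ y : ℤ → ℂ)

lemma mulM_right (X : Mat) (i j : ℤ) :
    mul X (todaM φ y) i j = X i (j-1) * y (j-1) + X i j * φ j + X i (j+1) * y j := by
  have h : mul X (todaM φ y) i j
      = ∑ t ∈ ({j-1, j, j+1} : Finset ℤ), X i t * todaM φ y t j := by
    apply tsum_eq_sum
    intro b hb
    simp only [Finset.mem_insert, Finset.mem_singleton] at hb
    push_neg at hb
    have hb0 : todaM φ y b j = 0 := by
      simp only [todaM]
      split_ifs <;> first | rfl | (exfalso; omega)
    rw [hb0, mul_zero]
  rw [h, Finset.sum_insert (by simp only [Finset.mem_insert, Finset.mem_singleton]; omega), Finset.sum_insert (by simp only [Finset.mem_insert, Finset.mem_singleton]; omega),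
    Finset.sum_singleton]
  have e1 : todaM φ y (j-1) j = y (j-1) := by
    simp only [todaM]; split_ifs <;> first | rfl | (exfalso; omega)
  have e2 : todaM φ y j j = φ j := by simp [todaM]
  have e3 : todaM φ y (j+1) j = y j := by
    simp only [todaM]; split_ifs <;> first | rfl | (exfalso; omega)
  rw [e1, e2, e3]; ring

lemma mulM_left (X : Mat) (i j : ℤ) :
    mul (todaM φ y) X i j = y (i-1) * X (i-1) j + φ i * X i j + y i * X (i+1) j := by
  have h : mul (todaM φ y) X i j
      = ∑ t ∈ ({i-1, i, i+1} : Finset ℤ), todaM φ y i t * X t j := by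
    apply tsum_eq_sum
    intro b hb
    simp only [Finset.mem_insert, Finset.mem_singleton] at hb
    push_neg at hb
    have hb0 : todaM φ y i b = 0 := by
      simp only [todaM]
      split_ifs <;> first | rfl | (exfalso; omega)
    rw [hb0, zero_mul]
  rw [h, Finset.sum_insert (by simp only [Finset.mem_insert, Finset.mem_singleton]; omega), Finset.sum_insert (by simp only [Finset.mem_insert, Finset.mem_singleton]; omega),
    Finset.sum_singleton]
  have e1 : todaM φ y i (i-1) = y (i-1) := by
    simp only [todaM]; split_ifs <;> first | rfl | (exfalso; omega)
  have e2 : todaM φ y i i = φ i := by simp [todaM]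
  have e3 : todaM φ y i (i+1) = y i := by
    simp only [todaM]; split_ifs <;> first | rfl | (exfalso; omega)
  rw [e1, e2, e3]; ring

lemma mul_one_right (X : Mat) : mul X one = X := by
  funext i j
  have h : mul X one i j = ∑ t ∈ ({j} : Finset ℤ), X i t * one t j := by
    apply tsum_eq_sum
    intro b hb
    simp only [Finset.mem_singleton] at hb
    simp [one, hb]
  rw [h, Finset.sum_singleton]
  simp [one]


lemma pow_succ' (X : Mat) (m : ℕ) : pow X (m+1) = mul X (pow X m) := rfl

lemma powM_maxdeg (m : ℕ) : MaxDeg (m : ℤ) (pow (todaM φ y) m) := by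
  induction m with
  | zero =>
    intro i j h
    simp only [pow, one] at h
    split_ifs at h with h1
    · omega
    · exact absurd rfl h
  | succ m ih =>
    intro i j h
    by_contra hc
    push_neg at hc
    rw [pow_succ', mulM_left] at h
    have h1 : pow (todaM φ y) m (i-1) j = 0 := by
      by_contra hz; have := ih _ _ hz; omega
    have h2 : pow (todaM φ y) m i j = 0 := by
      by_contra hz; have := ih _ _ hz; omega
    have h3 : pow (todaM φ y) m (i+1) j = 0 := by
      by_contra hz; have := ih _ _ hz; omega
    rw [h1, h2, h3] at h
    simp at h

lemma powM_top (m : ℕ) (i : ℤ) :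
    pow (todaM φ y) m i (i + m) = ∏ t ∈ Finset.range m, y (i + t) := by
  induction m generalizing i with
  | zero => simp [pow, one]
  | succ m ih =>
    rw [pow_succ', mulM_left]
    have h1 : pow (todaM φ y) m (i-1) (i + (m+1:ℕ)) = 0 := by
      by_contra hz; have := powM_maxdeg φ y m _ _ hz; push_cast at *; omega
    have h2 : pow (todaM φ y) m i (i + (m+1:ℕ)) = 0 := by
      by_contra hz; have := powM_maxdeg φ y m _ _ hz; push_cast at *; omega
    rw [h1, h2]
    have h3 : (i + ((m:ℕ)+1:ℕ) : ℤ) = (i+1) + (m:ℕ) := by push_cast; ring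
    rw [h3, ih (i+1)]
    rw [Finset.prod_range_succ']
    have hc : ∀ t ∈ Finset.range m, y (i + 1 + t) = y (i + ((t+1:ℕ):ℤ)) := by
      intro t _; congr 1; push_cast; ring
    rw [Finset.prod_congr rfl hc]
    push_cast
    simp only [add_zero]
    ring

lemma miniAssoc (X : Mat) :
    mul (todaM φ y) (mul X (todaM φ y)) = mul (mul (todaM φ y) X) (todaM φ y) := by
  funext i j
  rw [mulM_left, mulM_right, mulM_right, mulM_right, mulM_right, mulM_left, mulM_left,
    mulM_left]
  ring

lemma powM_comm (m : ℕ) :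
    mul (todaM φ y) (pow (todaM φ y) m) = mul (pow (todaM φ y) m) (todaM φ y) := by
  induction m with
  | zero =>
    funext i j
    have h : mul (todaM φ y) (pow (todaM φ y) 0) i j = todaM φ y i j := by
      show mul (todaM φ y) one i j = _
      have h2 : mul (todaM φ y) one i j
          = ∑ t ∈ ({j} : Finset ℤ), todaM φ y i t * one t j := by
        apply tsum_eq_sum
        intro b hb
        simp only [Finset.mem_singleton] at hb
        simp [one, hb]
      rw [h2, Finset.sum_singleton]
      simp [one]
    rw [h, mulM_right]
    show todaM φ y i j = one i (j-1) * y (j-1) + one i j * φ j + one i (j+1) * y j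
    simp only [one, todaM]
    split_ifs <;> (try ring_nf) <;>
      first
        | rfl
        | (exfalso; omega)
        | (exact congrArg φ (by omega))
        | (exact congrArg y (by omega))
        | ring
  | succ m ih =>
    rw [pow_succ', ih, miniAssoc, ← ih]

lemma powM_symm (m : ℕ) (i j : ℤ) :
    pow (todaM φ y) m i j = pow (todaM φ y) m j i := by
  induction m generalizing i j with
  | zero => simp only [pow, one]; split_ifs <;> first | rfl | (exfalso; omega)
  | succ m ih =>
    rw [pow_succ']
    conv_lhs => rw [powM_comm]
    rw [mulM_right, mulM_left, ih i (j-1), ih i j, ih i (j+1)]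
    ring
end Aux

section Main
variable (φ y : ℤ → ℂ)

lemma int_const (f : ℤ → ℂ) (h : ∀ i, f (i + 1) = f i) : ∀ i, f i = f 0 := by
  intro i
  induction i using Int.induction_on with
  | zero => rfl
  | succ n ih => rw [h, ih]
  | pred n ih =>
    have h2 := h (-(n : ℤ) - 1)
    rw [show (-(n : ℤ) - 1) + 1 = -(n : ℤ) from by ring] at h2
    rw [← h2]
    exact ih

lemma evalPoly_range (A : Polynomial ℂ) (X : Mat) (n : ℕ) (h : A.natDegree < n) :
    evalPoly A X = ∑ m ∈ Finset.range n, A.coeff m • pow X m := by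
  rw [evalPoly]
  apply Finset.sum_subset
  · intro m hm
    simp only [Finset.mem_range] at *
    omega
  · intro m _ hm
    simp only [Finset.mem_range, not_lt] at hm
    rw [Polynomial.coeff_eq_zero_of_natDegree_lt (by omega), zero_smul]

theorem key (hy0 : ∀ i, y i ≠ 0) :
    ∀ k : ℕ, ∀ X : Mat, MaxDeg (k : ℤ) X → (∀ i j, X i j = X j i) →
      comm X (todaM φ y) = 0 →
      ∃ A : Polynomial ℂ, A.natDegree ≤ k ∧ X = evalPoly A (todaM φ y) := by
  intro k
  induction k with
  | zero =>
    intro X hdeg hsym hcomm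
    have hdiag : ∀ i j : ℤ, i ≠ j → X i j = 0 := by
      intro i j hij
      rcases lt_or_gt_of_ne hij with hlt | hgt
      · by_contra hz
        have := hdeg _ _ hz
        simp only [Nat.cast_zero] at this
        omega
      · by_contra hz
        rw [hsym] at hz
        have := hdeg _ _ hz
        simp only [Nat.cast_zero] at this
        omega
    have hXM : ∀ i j, mul X (todaM φ y) i j = mul (todaM φ y) X i j := by
      intro i j
      have h0 : mul X (todaM φ y) i j - mul (todaM φ y) X i j = 0 :=
        congrFun (congrFun hcomm i) j
      exact sub_eq_zero.mp h0
    have hstep : ∀ i : ℤ, X (i + 1) (i + 1) = X i i := by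
      intro i
      have h := hXM i (i + 1)
      rw [mulM_right, mulM_left, show i + 1 - 1 = i from by ring] at h
      rw [hdiag i (i+1) (by omega), hdiag i (i+1+1) (by omega),
        hdiag (i-1) (i+1) (by omega)] at h
      have h' : y i * X (i+1) (i+1) = y i * X i i := by linear_combination -h
      exact mul_left_cancel₀ (hy0 i) h'
    have hconst : ∀ i : ℤ, X i i = X 0 0 := int_const (fun i => X i i) hstep
    refine ⟨Polynomial.C (X 0 0), by simp, ?_⟩
    rw [evalPoly, Polynomial.natDegree_C, zero_add, Finset.sum_range_one,
      Polynomial.coeff_C_zero]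
    funext i j
    by_cases hij : i = j
    · subst hij
      show X i i = (X 0 0) • pow (todaM φ y) 0 i i
      simp [pow, one, hconst i]
    · show X i j = (X 0 0) • pow (todaM φ y) 0 i j
      simp [pow, one, hij, hdiag i j hij]
  | succ k ih =>
    intro X hdeg hsym hcomm
    have hzero : ∀ i j : ℤ, ((k:ℤ) + 1) < j - i → X i j = 0 := by
      intro i j hij
      by_contra hz
      have := hdeg _ _ hz
      push_cast at this
      omega
    have hXM : ∀ i j, mul X (todaM φ y) i j = mul (todaM φ y) X i j := by
      intro i j
      have h0 : mul X (todaM φ y) i j - mul (todaM φ y) X i j = 0 :=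
        congrFun (congrFun hcomm i) j
      exact sub_eq_zero.mp h0
    -- recursion for the top diagonal
    have hrec : ∀ i : ℤ, X i (i + ((k:ℤ)+1)) * y (i + ((k:ℤ)+1))
        = y i * X (i+1) ((i+1) + ((k:ℤ)+1)) := by
      intro i
      have h := hXM i (i + ((k:ℤ)+1) + 1)
      rw [mulM_right, mulM_left] at h
      rw [hzero i (i + ((k:ℤ)+1) + 1) (by omega),
        hzero i (i + ((k:ℤ)+1) + 1 + 1) (by omega),
        hzero (i-1) (i + ((k:ℤ)+1) + 1) (by omega)] at h
      rw [show i + ((k:ℤ)+1) + 1 - 1 = i + ((k:ℤ)+1) from by ring] at h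
      rw [show i + ((k:ℤ)+1) + 1 = (i+1) + ((k:ℤ)+1) from by ring] at h
      linear_combination h
    -- the product of off-diagonal entries
    set P : ℤ → ℂ := fun i => ∏ t ∈ Finset.range (k+1), y (i + (t:ℤ)) with hPdef
    have hP0 : ∀ i, P i ≠ 0 := by
      intro i
      rw [hPdef]
      exact Finset.prod_ne_zero_iff.mpr (fun t _ => hy0 _)
    have hptop : ∀ i : ℤ, pow (todaM φ y) (k+1) i (i + ((k:ℤ)+1)) = P i := by
      intro i
      have h := powM_top φ y (k+1) i
      push_cast at h
      rw [hPdef]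
      exact h
    have hPP : ∀ i : ℤ, P (i+1) * y i = P i * y (i + ((k:ℤ)+1)) := by
      intro i
      have e1 : ∏ t ∈ Finset.range (k+2), y (i + (t:ℤ))
          = P i * y (i + ((k:ℤ)+1)) := by
        rw [Finset.prod_range_succ, hPdef]
        push_cast
        ring_nf
      have e2 : ∏ t ∈ Finset.range (k+2), y (i + (t:ℤ))
          = P (i+1) * y i := by
        rw [Finset.prod_range_succ', hPdef]
        congr 1
        · apply Finset.prod_congr rfl
          intro t _
          congr 1
          push_cast
          ring
        · congr 1
          push_cast
          ring
      rw [← e2, e1]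
    -- constancy of the normalized top diagonal
    have hd : ∀ i : ℤ, X i (i + ((k:ℤ)+1)) / P i = X 0 (0 + ((k:ℤ)+1)) / P 0 := by
      apply int_const (fun i => X i (i + ((k:ℤ)+1)) / P i)
      intro i
      show X (i+1) ((i+1) + ((k:ℤ)+1)) / P (i+1) = X i (i + ((k:ℤ)+1)) / P i
      rw [div_eq_div_iff (hP0 _) (hP0 _)]
      apply mul_right_cancel₀ (hy0 i)
      linear_combination (-(P i)) * hrec i - X i (i + ((k:ℤ)+1)) * hPP i
    set a : ℂ := X 0 (0 + ((k:ℤ)+1)) / P 0 with hadef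
    have hctop : ∀ i : ℤ, X i (i + ((k:ℤ)+1)) = a * P i := by
      intro i
      rw [← hd i, div_mul_cancel₀ _ (hP0 i)]
    -- the corrected matrix
    set X' : Mat := fun i j => X i j - a * pow (todaM φ y) (k+1) i j with hX'def
    have hX'deg : MaxDeg (k : ℤ) X' := by
      intro i j hz
      by_contra hc
      push_neg at hc
      rw [hX'def] at hz
      simp only at hz
      rcases eq_or_lt_of_le (by omega : (k:ℤ) + 1 ≤ j - i) with he | hlt
      · have hj : j = i + ((k:ℤ)+1) := by omega
        rw [hj, hctop i, hptop i] at hz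
        simp at hz
      · have hp0 : pow (todaM φ y) (k+1) i j = 0 := by
          by_contra hpz
          have := powM_maxdeg φ y (k+1) i j hpz
          push_cast at this
          omega
        rw [hzero i j (by omega), hp0] at hz
        simp at hz
    have hX'sym : ∀ i j, X' i j = X' j i := by
      intro i j
      rw [hX'def]
      simp only
      rw [hsym i j, powM_symm φ y (k+1) i j]
    have hX'comm : comm X' (todaM φ y) = 0 := by
      funext i j
      show mul X' (todaM φ y) i j - mul (todaM φ y) X' i j = 0
      have hX := hXM i j
      have hPc : mul (todaM φ y) (pow (todaM φ y) (k+1)) i j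
          = mul (pow (todaM φ y) (k+1)) (todaM φ y) i j :=
        congrFun (congrFun (powM_comm φ y (k+1)) i) j
      rw [mulM_right, mulM_left] at hX hPc ⊢
      rw [hX'def]
      simp only
      linear_combination hX + a * hPc
    obtain ⟨A', hdegA', hXA'⟩ := ih X' hX'deg hX'sym hX'comm
    set A : Polynomial ℂ := A' + Polynomial.C a * Polynomial.X ^ (k+1) with hAdef
    have hdegA : A.natDegree ≤ k + 1 := by
      rw [hAdef]
      apply le_trans (Polynomial.natDegree_add_le _ _)
      rw [max_le_iff]
      constructor
      · omega
      · calc (Polynomial.C a * Polynomial.X ^ (k+1)).natDegree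
            ≤ (Polynomial.X ^ (k+1) : Polynomial ℂ).natDegree :=
              Polynomial.natDegree_C_mul_le a _
          _ = k + 1 := Polynomial.natDegree_X_pow _
    refine ⟨A, hdegA, ?_⟩
    have hcoeff : ∀ m, A.coeff m = A'.coeff m + (if m = k+1 then a else 0) := by
      intro m
      rw [hAdef, Polynomial.coeff_add, Polynomial.coeff_C_mul, Polynomial.coeff_X_pow]
      split_ifs <;> ring
    rw [evalPoly_range A (todaM φ y) (k+2) (by omega)]
    rw [Finset.sum_congr rfl (fun m _ => by rw [hcoeff m, add_smul])]
    rw [Finset.sum_add_distrib]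
    rw [← evalPoly_range A' (todaM φ y) (k+2) (by omega), ← hXA']
    have hsum : (∑ m ∈ Finset.range (k+2),
        (if m = k+1 then a else 0) • pow (todaM φ y) m) = a • pow (todaM φ y) (k+1) := by
      rw [Finset.sum_eq_single (k+1)]
      · simp
      · intro b _ hb
        simp [hb]
      · intro hmem
        exact absurd (Finset.self_mem_range_succ (k+1)) hmem
    rw [hsum]
    funext i j
    show X i j = X' i j + a • pow (todaM φ y) (k+1) i j
    rw [hX'def]
    simp only [smul_eq_mul]
    ring

end Main

/-- a periodic symmetric matrix of maximal degree `k` commuting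
with the Toda Lax matrix `M` is a polynomial in `M` of degree at most `k`. -/
theorem symmetric_commutant_is_polynomial
    (N : ℕ) (hN : 0 < N) (φ y : ℤ → ℂ)
    (hφ : ∀ i, φ (i + N) = φ i) (hy : ∀ i, y (i + N) = y i)
    (hy0 : ∀ i, y i ≠ 0)
    (k : ℕ) (X : Mat) (hXper : Periodic N X) (hXdeg : MaxDeg k X)
    (hXsym : ∀ i j, X i j = X j i)
    (hcomm : comm X (todaM φ y) = 0) :
    ∃ A : Polynomial ℂ, A.natDegree ≤ k ∧ X = evalPoly A (todaM φ y) := by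
  exact key φ y hy0 k X hXdeg hXsym hcomm

end Toda
end

section
/- Let T(x) be a monic square-free polynomial of degree 2k and W' a polynomial of degree n with k ≤ n. Suppose W'(x)² = T(x)G(x)² − f(x) with deg G = n−k and deg f ≤ n−1, where the leading coefficients of W' and G·(leading part of √T) agree. Then conversely Res_{x=∞}(x^{j−1}W'(x)/√T(x)) = 0 for j = 1, …, k. -/
namespace Toda

lemma atInf_coeff (p : Polynomial ℂ) (m : ℤ) :
    (atInf p).coeff m = if 0 ≤ -m then p.coeff (-m).toNat else 0 := by
  have h1 : atInf p = ∑ e ∈ p.support, HahnSeries.single (-(e : ℤ)) (p.coeff e) := by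
    rw [atInf, Polynomial.eval₂_eq_sum, Polynomial.sum_def]
    refine Finset.sum_congr rfl fun e _ => ?_
    rw [HahnSeries.single_pow, HahnSeries.C_apply, HahnSeries.single_mul_single]
    simp
  rw [h1]
  rw [show ((∑ e ∈ p.support, HahnSeries.single (-(e : ℤ)) (p.coeff e)).coeff m) =
      ∑ e ∈ p.support, (HahnSeries.single (-(e : ℤ)) (p.coeff e)).coeff m from
    map_sum (HahnSeries.coeff.addMonoidHom m) _ _]
  simp only [HahnSeries.coeff.addMonoidHom, AddMonoidHom.coe_mk, ZeroHom.coe_mk,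
    HahnSeries.coeff_single]
  by_cases hm : 0 ≤ -m
  · rw [if_pos hm]
    refine (Finset.sum_eq_single ((-m).toNat) ?_ ?_).trans ?_
    · intro b _ hb
      rw [if_neg (by omega)]
    · intro h
      rw [Polynomial.notMem_support_iff.mp h, if_pos (by omega)]
    · rw [if_pos (by omega)]
  · rw [if_neg hm]
    refine Finset.sum_eq_zero fun e _ => ?_
    rw [if_neg (by omega)]

lemma le_order_of (x : LaurentSeries ℂ) (c : ℤ) (h : ∀ m, m < c → x.coeff m = 0)
    (hx : x ≠ 0) : c ≤ x.order := by
  by_contra h'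
  push_neg at h'
  exact (mt HahnSeries.coeff_order_eq_zero.mp hx) (h _ h')

lemma atInf_coeff_natDegree (p : Polynomial ℂ) :
    (atInf p).coeff (-(p.natDegree : ℤ)) = p.leadingCoeff := by
  rw [atInf_coeff, if_pos (by omega), Polynomial.leadingCoeff]
  congr 1
  omega

lemma atInf_ne_zero {p : Polynomial ℂ} (hp : p ≠ 0) : atInf p ≠ 0 := by
  intro h
  have := atInf_coeff_natDegree p
  rw [h] at this
  simp only [HahnSeries.coeff_zero] at this
  exact hp (Polynomial.leadingCoeff_eq_zero.mp this.symm)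

lemma order_atInf {p : Polynomial ℂ} (hp : p ≠ 0) :
    (atInf p).order = -(p.natDegree : ℤ) := by
  refine le_antisymm (HahnSeries.order_le_of_coeff_ne_zero ?_) (le_order_of _ _ ?_ (atInf_ne_zero hp))
  · rw [atInf_coeff_natDegree]
    exact Polynomial.leadingCoeff_ne_zero.mpr hp
  · intro m hm
    rw [atInf_coeff]
    by_cases h : 0 ≤ -m
    · rw [if_pos h, Polynomial.coeff_eq_zero_of_natDegree_lt (by omega)]
    · rw [if_neg h]

/-- converse direction: if `W'² = T G² − f` with matching degrees
and leading coefficients, then the `k` residue conditions for `W'/√T` hold. -/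
theorem matrix_model_curve_gives_residue_conditions
    (k n : ℕ) (hk : 0 < k) (hkn : k ≤ n)
    (T : Polynomial ℂ) (hTmonic : T.Monic) (hTdeg : T.natDegree = 2 * k)
    (hTsf : Squarefree T)
    (s : LaurentSeries ℂ) (hs2 : s * s = atInf T)
    (hslead : s.coeff (-(k : ℤ)) = 1)
    (hsord : ∀ m : ℤ, m < -(k : ℤ) → s.coeff m = 0)
    (W' G f : Polynomial ℂ) (hW' : W'.natDegree = n)
    (hGdeg : G.natDegree = n - k) (hfdeg : f.natDegree ≤ n - 1)
    (hlead : W'.leadingCoeff = G.leadingCoeff)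
    (hfac : W' ^ 2 = T * G ^ 2 - f) :
    ∀ j : ℕ, 1 ≤ j → j ≤ k → (atInf W' / s).coeff (j : ℤ) = 0 := by
  intro j hj1 hjk
  have hn1 : 1 ≤ n := hk.trans_le hkn
  have hW'ne : W' ≠ 0 := by
    intro h; rw [h, Polynomial.natDegree_zero] at hW'; omega
  have hlne : W'.leadingCoeff ≠ 0 := Polynomial.leadingCoeff_ne_zero.mpr hW'ne
  have hGne : G ≠ 0 := by
    intro h; rw [h, Polynomial.leadingCoeff_zero] at hlead; exact hlne hlead
  have hTne : T ≠ 0 := hTmonic.ne_zero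
  have hsne : s ≠ 0 := by
    intro h; rw [h] at hslead; simp at hslead
  have hsord' : s.order = -(k : ℤ) :=
    le_antisymm (HahnSeries.order_le_of_coeff_ne_zero (by rw [hslead]; exact one_ne_zero))
      (le_order_of _ _ hsord hsne)
  have hsinvne : s⁻¹ ≠ 0 := inv_ne_zero hsne
  have hssinv : s * s⁻¹ = 1 := mul_inv_cancel₀ hsne
  have hsinvord : (s⁻¹).order = (k : ℤ) := by
    have h := HahnSeries.order_mul hsne hsinvne
    rw [hssinv, HahnSeries.order_one, hsord'] at h
    omega
  -- notation
  set A : LaurentSeries ℂ := atInf W' * s⁻¹ with hA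
  set u : LaurentSeries ℂ := A - atInf G with hu
  set v : LaurentSeries ℂ := A + atInf G with hv
  set d : ℤ := -(n : ℤ) + (k : ℤ) with hd
  have hWord : (atInf W').order = -(n : ℤ) := by rw [order_atInf hW'ne, hW']
  have hAne : A ≠ 0 := mul_ne_zero (atInf_ne_zero hW'ne) hsinvne
  have hAord : A.order = d := by
    rw [hA, HahnSeries.order_mul (atInf_ne_zero hW'ne) hsinvne, hWord, hsinvord]
  have hAcoeff : A.coeff d = W'.leadingCoeff := by
    have h := HahnSeries.coeff_mul_order_add_order (atInf W') s⁻¹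
    rw [hWord, hsinvord, HahnSeries.leadingCoeff_eq, HahnSeries.leadingCoeff_eq,
      hWord, hsinvord] at h
    have h2 : (s⁻¹).coeff (k : ℤ) = 1 := by
      have h1 := HahnSeries.coeff_mul_order_add_order s s⁻¹
      rw [hssinv, HahnSeries.leadingCoeff_eq, HahnSeries.leadingCoeff_eq, hsord', hsinvord,
        hslead] at h1
      simpa using h1.symm
    rw [h2, mul_one] at h
    rw [hA, hd, h, ← hW', atInf_coeff_natDegree]
  have hGcast : -(G.natDegree : ℤ) = d := by rw [hGdeg]; omega
  have hGord : (atInf G).order = d := by rw [order_atInf hGne, hGcast]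
  have hGcoeff : (atInf G).coeff d = W'.leadingCoeff := by
    rw [← hGcast, atInf_coeff_natDegree, hlead]
  have hvcoeff : v.coeff d = 2 * W'.leadingCoeff := by
    rw [hv, HahnSeries.coeff_add, hAcoeff, hGcoeff]; ring
  have hvne : v ≠ 0 := by
    intro h
    rw [h, HahnSeries.coeff_zero] at hvcoeff
    exact mul_ne_zero two_ne_zero hlne hvcoeff.symm
  have hvord : v.order = d := by
    refine le_antisymm (HahnSeries.order_le_of_coeff_ne_zero ?_) (le_order_of _ _ ?_ hvne)
    · rw [hvcoeff]; exact mul_ne_zero two_ne_zero hlne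
    · intro m hm
      rw [hv, HahnSeries.coeff_add,
        HahnSeries.coeff_eq_zero_of_lt_order (by rw [hAord]; exact hm),
        HahnSeries.coeff_eq_zero_of_lt_order (by rw [hGord]; exact hm), add_zero]
  -- algebra
  have hmul : ∀ p q : Polynomial ℂ, atInf (p * q) = atInf p * atInf q := fun p q =>
    Polynomial.eval₂_mul _ _
  have hsub : ∀ p q : Polynomial ℂ, atInf (p - q) = atInf p - atInf q := fun p q =>
    Polynomial.eval₂_sub _
  have hfac2 : W' * W' = T * (G * G) - f := by linear_combination hfac
  have hfacL : atInf W' * atInf W' = atInf T * (atInf G * atInf G) - atInf f := by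
    rw [← hmul W' W', hfac2, hsub, hmul, hmul]
  have hAs : A * s = atInf W' := by
    rw [hA, mul_assoc, inv_mul_cancel₀ hsne, mul_one]
  have hTneL : atInf T ≠ 0 := atInf_ne_zero hTne
  have huvT : u * v * atInf T = -(atInf f) := by
    calc u * v * atInf T = (A * s) * (A * s) - (atInf G * atInf G) * (s * s) := by
          rw [← hs2]; ring
      _ = atInf W' * atInf W' - atInf G * atInf G * atInf T := by rw [hAs, hs2]
      _ = -(atInf f) := by rw [hfacL]; ring
  have huv : u * v = -(atInf f) * (atInf T)⁻¹ :=
    (eq_mul_inv_iff_mul_eq₀ hTneL).mpr huvT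
  have hfinal : atInf W' / s = u + atInf G := by
    rw [div_eq_mul_inv, hu]; ring
  by_cases hf : f = 0
  · have : u = 0 := by
      rcases mul_eq_zero.mp (by rw [huv, hf]; simp [atInf]) with h | h
      · exact h
      · exact absurd h hvne
    rw [hfinal, this, zero_add, atInf_coeff, if_neg (by omega)]
  · -- orders
    have hford : (atInf f).order = -(f.natDegree : ℤ) := order_atInf hf
    have hfdeg' : (f.natDegree : ℤ) ≤ (n : ℤ) - 1 := by omega
    have hTord : (atInf T).order = -(2 * k : ℤ) := by
      rw [order_atInf hTne, hTdeg]; push_cast; ring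
    have hTinvne : (atInf T)⁻¹ ≠ 0 := inv_ne_zero hTneL
    have hTinvord : ((atInf T)⁻¹).order = (2 * k : ℤ) := by
      have h := HahnSeries.order_mul hTneL hTinvne
      rw [mul_inv_cancel₀ hTneL, HahnSeries.order_one, hTord] at h
      omega
    have huvne : u * v ≠ 0 := by
      rw [huv]
      exact mul_ne_zero (neg_ne_zero.mpr (atInf_ne_zero hf)) hTinvne
    have hune : u ≠ 0 := left_ne_zero_of_mul huvne
    have huvord : (u * v).order = -(f.natDegree : ℤ) + (2 * k : ℤ) := by
      rw [huv, HahnSeries.order_mul (neg_ne_zero.mpr (atInf_ne_zero hf)) hTinvne,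
        HahnSeries.order_neg, hford, hTinvord]
    have huord : u.order + v.order = -(f.natDegree : ℤ) + (2 * k : ℤ) := by
      rw [← HahnSeries.order_mul hune hvne, huvord]
    have hjlt : (j : ℤ) < u.order := by
      rw [hvord] at huord
      omega
    rw [hfinal, HahnSeries.coeff_add, HahnSeries.coeff_eq_zero_of_lt_order hjlt,
      atInf_coeff, if_neg (by omega), add_zero]

end Toda
end
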